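/- Let E be a finite subgroup of the additive group (F, +) with |E| = p^r. Then the polynomial ∏_{c ∈ E} (X − c) ∈ F[X] has the form X^{p^r} + Σ_{i=0}^{r-1} e_i X^{p^i} for some e_0, …, e_{r-1} ∈ F; equivalently, for every k, if the coefficient of X^k in ∏_{c ∈ E} (X − c) is nonzero then k = p^i for some 0 ≤ i ≤ r. -/

import Mathlib

open Polynomial

theorem aux_pow_of_dvd_choose {p : ℕ} (hp : p.Prime) :
    ∀ k, 2 ≤ k → (∀ i, 0 < i → i < k → p ∣ k.choose i) → ∃ t, k = p ^ t := by
  have : Fact p.Prime := ⟨hp⟩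
  have hp2 := hp.two_le
  intro k
  induction k using Nat.strong_induction_on with
  | _ k ih =>
    intro hk2 h
    have hpk : p ∣ k := by
      simpa [Nat.choose_one_right] using h 1 one_pos (by omega)
    obtain ⟨m, rfl⟩ := hpk
    have hm1 : 1 ≤ m := by nlinarith
    rcases eq_or_lt_of_le hm1 with h1 | hm2
    · exact ⟨1, by rw [pow_one, ← h1, mul_one]⟩
    · have hmlt : m < p * m := by nlinarith
      have h' : ∀ i, 0 < i → i < m → p ∣ m.choose i := by
        intro i hi him
        have hdvd : p ∣ (p * m).choose (p * i) :=
          h (p * i) (by positivity) (by exact (Nat.mul_lt_mul_left hp.pos).mpr him)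
        have lucas := Choose.choose_modEq_choose_mod_mul_choose_div_nat
          (p := p) (n := p * m) (k := p * i)
        rw [Nat.mul_mod_right, Nat.mul_mod_right,
          Nat.mul_div_cancel_left _ hp.pos, Nat.mul_div_cancel_left _ hp.pos] at lucas
        simp only [Nat.choose_self, one_mul] at lucas
        have h0 : (p * m).choose (p * i) ≡ 0 [MOD p] :=
          (Nat.modEq_zero_iff_dvd).mpr hdvd
        exact (Nat.modEq_zero_iff_dvd).mp (lucas.symm.trans h0)
      obtain ⟨t, rfl⟩ := ih m hmlt hm2 h'
      exact ⟨t + 1, by ring⟩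

theorem statement0 {F : Type*} [Field F] {p : ℕ} [Fact p.Prime] [CharP F p]
    (E : AddSubgroup F) [Fintype E] (r : ℕ) (hcard : Fintype.card E = p ^ r) :
    (∃ e : ℕ → F,
      ∏ c : E, (X - C (c : F)) =
        X ^ p ^ r + ∑ i ∈ Finset.range r, C (e i) * X ^ p ^ i) ∧
    (∀ k : ℕ, (∏ c : E, (X - C (c : F))).coeff k ≠ 0 → ∃ i ≤ r, k = p ^ i) := by
  have hp : p.Prime := Fact.out
  have hp2 := hp.two_le
  set f : F[X] := ∏ c : E, (X - C (c : F)) with hf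
  have hmonic : f.Monic := monic_prod_of_monic _ _ fun _ _ => monic_X_sub_C _
  have hdeg : f.natDegree = p ^ r := by
    rw [hf, natDegree_prod_of_monic _ _ fun _ _ => monic_X_sub_C _]
    simp [hcard]
  have hfne : f ≠ 0 := hmonic.ne_zero
  have hprpos : 0 < p ^ r := pow_pos hp.pos r
  -- translation invariance
  have htrans : ∀ c : E, f.comp (X + C (c : F)) = f := by
    intro c
    rw [hf, prod_comp]
    have step : ∀ c' : E, (X - C (c' : F)).comp (X + C (c : F))
        = X - C (((c' - c : E) : F)) := by
      intro c'
      simp [sub_comp]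
      ring
    rw [Finset.prod_congr rfl fun c' _ => step c']
    exact Fintype.prod_equiv (Equiv.subRight c)
      (fun c' => X - C (((c' - c : E) : F))) (fun y => X - C ((y : F))) (fun x => rfl)
  -- roots of f
  have hroot : ∀ c : E, f.eval (c : F) = 0 := by
    intro c
    rw [hf, eval_prod]
    exact Finset.prod_eq_zero (Finset.mem_univ c) (by simp)
  -- the key additive identity
  have key : (f.map (C : F →+* F[X])).comp (X + C (X : F[X]))
      = f.map (C : F →+* F[X]) + C f := by
    set F₁ : Polynomial F[X] := f.map (C : F →+* F[X]) with hF₁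
    have hF₁monic : F₁.Monic := hmonic.map _
    have hF₁deg : F₁.natDegree = p ^ r := by
      rw [hF₁, natDegree_map_eq_of_injective (C_injective) f, hdeg]
    set A : Polynomial F[X] := F₁.comp (X + C (X : F[X])) with hA
    set B : Polynomial F[X] := F₁ + C f with hB
    have hAmonic : A.Monic := hF₁monic.comp_X_add_C _
    have hAdeg : A.natDegree = p ^ r := by
      rw [hA, natDegree_comp, natDegree_X_add_C, mul_one, hF₁deg]
    have hdegCf : (C f : Polynomial F[X]).degree < F₁.degree := by
      apply lt_of_le_of_lt degree_C_le
      apply natDegree_pos_iff_degree_pos.mp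
      rw [hF₁deg]; exact hprpos
    have hBmonic : B.Monic := hF₁monic.add_of_left hdegCf
    have hBdeg : B.natDegree = p ^ r := by
      rw [hB, natDegree_add_eq_left_of_degree_lt hdegCf, hF₁deg]
    have heval : ∀ c : E, (A - B).eval (C ((c : F))) = 0 := by
      intro c
      have e1 : A.eval (C ((c : F))) = f.comp (X + C ((c : F))) := by
        rw [hA, eval_comp]
        simp only [eval_add, eval_X, eval_C]
        rw [hF₁, eval_map]
        rw [show eval₂ (C : F →+* F[X]) (C ((c : F)) + X) f
            = f.comp (C ((c : F)) + X) from rfl]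
        rw [add_comm]
      have e2 : F₁.eval (C ((c : F))) = 0 := by
        rw [hF₁, eval_map, eval₂_hom, hroot c, map_zero]
      rw [eval_sub, e1, htrans c, hB, eval_add, e2, eval_C, zero_add, sub_self]
    have hAB : A - B = 0 := by
      by_cases h0 : A - B = 0
      · exact h0
      · refine eq_zero_of_natDegree_lt_card_of_eval_eq_zero (A - B)
          (f := fun c : E => (C ((c : F)) : F[X]))
          (fun a b hab => Subtype.ext (C_injective hab)) heval ?_
        rw [hcard]
        have hlt : (A - B).degree < A.degree := by
          refine degree_sub_lt ?_ hAmonic.ne_zero ?_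
          · rw [degree_eq_natDegree hAmonic.ne_zero, degree_eq_natDegree hBmonic.ne_zero,
              hAdeg, hBdeg]
          · rw [hAmonic.leadingCoeff, hBmonic.leadingCoeff]
        rw [degree_eq_natDegree hAmonic.ne_zero, hAdeg] at hlt
        exact (natDegree_lt_iff_degree_lt h0).mpr hlt
    have := sub_eq_zero.mp hAB
    rw [hA, hB] at this
    exact this
  -- coefficient relation from the key identity
  have hcoeffrel : ∀ k i : ℕ, 0 < i → i < k → f.coeff k * (k.choose i : F) = 0 := by
    intro k i hi hik
    have h1 := congrArg (fun P : Polynomial F[X] => (P.coeff i).coeff (k - i)) key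
    have lhs : (((f.map (C : F →+* F[X])).comp (X + C (X : F[X]))).coeff i).coeff (k - i)
        = f.coeff k * (k.choose i : F) := by
      rw [show (f.map (C : F →+* F[X])).comp (X + C (X : F[X]))
          = eval₂ C (X + C (X : F[X])) (f.map (C : F →+* F[X])) from rfl]
      rw [eval₂_eq_sum, Polynomial.sum_def, finset_sum_coeff, finset_sum_coeff]
      rw [Finset.sum_eq_single k]
      · rw [coeff_C_mul, coeff_map, coeff_X_add_C_pow, coeff_C_mul,
          ← C_eq_natCast, coeff_mul_C, coeff_X_pow, if_pos rfl, one_mul]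
      · intro n _ hnk
        rw [coeff_C_mul, coeff_map, coeff_X_add_C_pow, coeff_C_mul,
          ← C_eq_natCast, coeff_mul_C, coeff_X_pow,
          if_neg (by omega), zero_mul, mul_zero]
      · intro hk
        have hzk : f.coeff k = 0 := by
          have := notMem_support_iff.mp hk
          rwa [coeff_map, map_eq_zero_iff _ C_injective] at this
        simp [coeff_C_mul, coeff_map, hzk]
    have rhs : ((f.map (C : F →+* F[X]) + C f).coeff i).coeff (k - i) = 0 := by
      rw [coeff_add, coeff_map, coeff_C, if_neg (by omega), add_zero, coeff_C,
        if_neg (by omega)]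
    rw [lhs, rhs] at h1
    exact h1
  -- coeff 0 of f is 0
  have h0 : f.coeff 0 = 0 := by
    rw [coeff_zero_eq_eval_zero, hf, eval_prod]
    refine Finset.prod_eq_zero (Finset.mem_univ (0 : E)) ?_
    simp
  -- part 2
  have part2 : ∀ k, f.coeff k ≠ 0 → ∃ i ≤ r, k = p ^ i := by
    intro k hk
    have hk0 : k ≠ 0 := fun h => hk (h ▸ h0)
    have hkle : k ≤ p ^ r := hdeg ▸ le_natDegree_of_ne_zero hk
    rcases eq_or_lt_of_le (Nat.one_le_iff_ne_zero.mpr hk0) with h1 | h2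
    · exact ⟨0, Nat.zero_le r, by rw [pow_zero, ← h1]⟩
    · have hdvd : ∀ i, 0 < i → i < k → p ∣ k.choose i := by
        intro i hi' hik
        have h2' := hcoeffrel k i hi' hik
        have : (k.choose i : F) = 0 := by
          rcases mul_eq_zero.mp h2' with h | h
          · exact absurd h hk
          · exact h
        exact (CharP.cast_eq_zero_iff F p _).mp this
      obtain ⟨t, rfl⟩ := aux_pow_of_dvd_choose hp k h2 hdvd
      exact ⟨t, (Nat.pow_le_pow_iff_right hp2).mp hkle, rfl⟩
  refine ⟨⟨fun i => f.coeff (p ^ i), ?_⟩, part2⟩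
  have hcoefftop : f.coeff (p ^ r) = 1 := by
    rw [← hdeg]; exact hmonic.coeff_natDegree
  ext k
  rw [coeff_add, coeff_X_pow, finset_sum_coeff]
  simp only [coeff_C_mul, coeff_X_pow]
  by_cases hk : f.coeff k = 0
  · rw [hk]
    have h1 : ¬ (k = p ^ r) := fun h => by rw [h, hcoefftop] at hk; exact one_ne_zero hk
    rw [if_neg h1, Finset.sum_eq_zero, add_zero]
    intro j hj
    by_cases h2 : k = p ^ j
    · rw [if_pos h2, mul_one, ← h2, hk]
    · rw [if_neg h2, mul_zero]
  · obtain ⟨i, hir, rfl⟩ := part2 k hk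
    rcases eq_or_lt_of_le hir with rfl | hilt
    · rw [if_pos rfl, hcoefftop, Finset.sum_eq_zero, add_zero]
      intro j hj
      rw [Finset.mem_range] at hj
      rw [if_neg fun h => by have := Nat.pow_right_injective hp2 h; omega, mul_zero]
    · rw [if_neg fun h => by have := Nat.pow_right_injective hp2 h; omega, zero_add,
        Finset.sum_eq_single i]
      · rw [if_pos rfl, mul_one]
      · intro j _ hji
        rw [if_neg fun h => hji (Nat.pow_right_injective hp2 h).symm, mul_zero]
      · intro hi
        exact absurd (Finset.mem_range.mpr hilt) hi
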